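/- arXiv:1110.0164 — 2 statements merged into one kernel-verified Lean document; each statement's English description precedes it below -/
import Mathlib

section
/- Let n ≥ 1, and let G be a group acting on a simplicial set X by simplicial automorphisms such that for every m the action of G on the set Xₘ of m-simplices is free. Then the induced action of G on Pₙ(X) is free in every degree, and the canonical map of simplicial sets Pₙ(X)/G → Pₙ(X/G), induced by applying Pₙ to the quotient map X → X/G and the universal property of the degreewise quotient, is an isomorphism of simplicial sets. -/
open CategoryTheory Simplicial Opposite

/-- An action of a group `G` on a simplicial set `X` by simplicial automorphisms. -/
structure SSetAction (G : Type) [Group G] (X : SSet.{0}) where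
  smul : ∀ ⦃m : SimplexCategoryᵒᵖ⦄, G → X.obj m → X.obj m
  one_smul : ∀ ⦃m : SimplexCategoryᵒᵖ⦄ (x : X.obj m), smul 1 x = x
  mul_smul : ∀ ⦃m : SimplexCategoryᵒᵖ⦄ (g h : G) (x : X.obj m),
    smul (g * h) x = smul g (smul h x)
  map_smul : ∀ ⦃m m' : SimplexCategoryᵒᵖ⦄ (f : m ⟶ m') (g : G) (x : X.obj m),
    X.map f (smul g x) = smul g (X.map f x)

namespace SSetAction

variable {G : Type} [Group G] {X : SSet.{0}} (σ : SSetAction G X)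

/-- The orbit relation of the action, in each simplicial degree. -/
def rel (m : SimplexCategoryᵒᵖ) (x y : X.obj m) : Prop := ∃ g : G, σ.smul g x = y

/-- The degreewise quotient simplicial set `X/G`. -/
def quotient : SSet.{0} where
  obj m := Quot (σ.rel m)
  map f := ↾(Quot.lift (fun x => Quot.mk _ (X.map f x))
    (fun x y ⟨g, hg⟩ => Quot.sound ⟨g, by rw [← σ.map_smul, hg]⟩))
  map_id m := by
    ext x
    induction x using Quot.ind
    simp [FunctorToTypes.map_id_apply]
  map_comp f g := by
    ext x
    induction x using Quot.ind
    simp [FunctorToTypes.map_comp_apply]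

/-- The quotient map of simplicial sets `X ⟶ X/G`. -/
def quotientHom : X ⟶ σ.quotient where
  app m := ↾(fun x => Quot.mk _ x)
  naturality _ _ f := rfl

/-- The simplicial automorphism of `X` given by the action of `g`. -/
def toHom (g : G) : X ⟶ X where
  app m := ↾(fun x => σ.smul g x)
  naturality m m' f := by
    ext x
    exact (σ.map_smul f g x).symm

/-- The action of `G` on `F.obj X` induced by functoriality of `F : SSet ⥤ SSet`. -/
def push (F : SSet.{0} ⥤ SSet.{0}) : SSetAction G (F.obj X) where
  smul m g y := (F.map (σ.toHom g)).app m y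
  one_smul m y := by
    have h : σ.toHom (1 : G) = 𝟙 X := by
      apply NatTrans.ext
      ext m x
      exact σ.one_smul x
    show (F.map (σ.toHom 1)).app m y = y
    rw [h, F.map_id]
    rfl
  mul_smul m g h y := by
    have hc : σ.toHom (g * h) = σ.toHom h ≫ σ.toHom g := by
      apply NatTrans.ext
      ext m x
      exact σ.mul_smul g h x
    show (F.map (σ.toHom (g * h))).app m y =
      (F.map (σ.toHom g)).app m ((F.map (σ.toHom h)).app m y)
    rw [hc, F.map_comp]
    rfl
  map_smul m m' f g y := (NatTrans.naturality_apply (F.map (σ.toHom g)) f y).symm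

/-- The canonical comparison map `(F X)/G ⟶ F (X/G)` induced by applying `F` to the
quotient map `X ⟶ X/G`. -/
def quotientCompare (F : SSet.{0} ⥤ SSet.{0}) :
    (σ.push F).quotient ⟶ F.obj σ.quotient where
  app m := ↾(Quot.lift (fun y => (F.map σ.quotientHom).app m y) (by
    rintro y z ⟨g, rfl⟩
    have hq : σ.toHom g ≫ σ.quotientHom = σ.quotientHom := by
      apply NatTrans.ext
      ext k x
      exact (Quot.sound ⟨g, rfl⟩).symm
    show (F.map σ.quotientHom).app m y =
      (F.map (σ.toHom g) ≫ F.map σ.quotientHom).app m y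
    rw [← F.map_comp, hq]))
  naturality m m' f := by
    ext y
    induction y using Quot.ind
    exact NatTrans.naturality_apply (F.map σ.quotientHom) f _

end SSetAction

section SimplexHelpers

open SimplexCategory

namespace SSetActionAux

/-- The edge from vertex `i` to vertex `j` of `y`. -/
def edg {y : SimplexCategory} (i j : Fin (y.len + 1)) (h : i ≤ j) :
    (⦋1⦌ : SimplexCategory) ⟶ y :=
  SimplexCategory.Hom.mk ⟨![i, j], by
    rw [Fin.monotone_iff_le_succ]
    intro t
    fin_cases t <;> simpa using h⟩

/-- The triangle with vertices `i ≤ j ≤ l` of `y`. -/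
def tri {y : SimplexCategory} (i j l : Fin (y.len + 1)) (hij : i ≤ j)
    (hjl : j ≤ l) : (⦋2⦌ : SimplexCategory) ⟶ y :=
  SimplexCategory.Hom.mk ⟨![i, j, l], by
    rw [Fin.monotone_iff_le_succ]
    intro t
    fin_cases t <;> first | (simpa using hij) | (simpa using hjl)⟩

lemma const_edg0 {y : SimplexCategory} (i j : Fin (y.len + 1)) (h : i ≤ j) :
    SimplexCategory.const ⦋0⦌ ⦋1⦌ 0 ≫ edg i j h = SimplexCategory.const ⦋0⦌ y i := by
  rw [SimplexCategory.const_comp]; rfl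

lemma const_edg1 {y : SimplexCategory} (i j : Fin (y.len + 1)) (h : i ≤ j) :
    SimplexCategory.const ⦋0⦌ ⦋1⦌ 1 ≫ edg i j h = SimplexCategory.const ⦋0⦌ y j := by
  rw [SimplexCategory.const_comp]; rfl

lemma const_tri0 {y : SimplexCategory} (i j l : Fin (y.len + 1)) (hij : i ≤ j) (hjl : j ≤ l) :
    SimplexCategory.const ⦋0⦌ ⦋2⦌ 0 ≫ tri i j l hij hjl = SimplexCategory.const ⦋0⦌ y i := by
  rw [SimplexCategory.const_comp]; rfl

lemma const_tri1 {y : SimplexCategory} (i j l : Fin (y.len + 1)) (hij : i ≤ j) (hjl : j ≤ l) :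
    SimplexCategory.const ⦋0⦌ ⦋2⦌ 1 ≫ tri i j l hij hjl = SimplexCategory.const ⦋0⦌ y j := by
  rw [SimplexCategory.const_comp]; rfl

lemma const_tri2 {y : SimplexCategory} (i j l : Fin (y.len + 1)) (hij : i ≤ j) (hjl : j ≤ l) :
    SimplexCategory.const ⦋0⦌ ⦋2⦌ 2 ≫ tri i j l hij hjl = SimplexCategory.const ⦋0⦌ y l := by
  rw [SimplexCategory.const_comp]; rfl

lemma edg_tri12 {y : SimplexCategory} (h : (1 : Fin (SimplexCategory.len ⦋2⦌ + 1)) ≤ 2)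
    (i j l : Fin (y.len + 1)) (hij : i ≤ j) (hjl : j ≤ l) :
    edg 1 2 h ≫ tri i j l hij hjl = edg j l hjl := by
  apply SimplexCategory.Hom.ext_one_left <;> rfl

lemma map_map (X : SSet.{0}) {a b c : SimplexCategory} (η : b ⟶ a) (θ : c ⟶ b)
    (x : X.obj (Opposite.op a)) :
    X.map θ.op (X.map η.op x) = X.map (θ ≫ η).op x := by
  rw [op_comp, FunctorToTypes.map_comp_apply]

end SSetActionAux

end SimplexHelpers

namespace SSetAction

open SimplexCategory SSetActionAux

variable {G : Type} [Group G] {X : SSet.{0}} (σ : SSetAction G X)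

lemma rel_equivalence (m : SimplexCategoryᵒᵖ) : Equivalence (σ.rel m) where
  refl x := ⟨1, σ.one_smul x⟩
  symm := by
    rintro x y ⟨g, rfl⟩
    exact ⟨g⁻¹, by rw [← σ.mul_smul, inv_mul_cancel, σ.one_smul]⟩
  trans := by
    rintro x y z ⟨g, rfl⟩ ⟨h, rfl⟩
    exact ⟨h * g, (σ.mul_smul h g x)⟩

lemma exists_smul_eq {m : SimplexCategoryᵒᵖ} {x y : X.obj m}
    (h : Quot.mk (σ.rel m) x = Quot.mk (σ.rel m) y) : ∃ g : G, σ.smul g x = y :=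
  ((σ.rel_equivalence m).eqvGen_iff).mp (Quot.eq.mp h)

lemma smul_cancel
    (hfree : ∀ (m : SimplexCategoryᵒᵖ) (g : G), g ≠ 1 → ∀ x : X.obj m, σ.smul g x ≠ x)
    {m : SimplexCategoryᵒᵖ} {g h : G} {x : X.obj m}
    (he : σ.smul g x = σ.smul h x) : g = h := by
  by_contra hne
  have h1 : h⁻¹ * g ≠ 1 := by
    intro hc
    exact hne (by rw [← one_mul g, ← mul_inv_cancel h, mul_assoc, hc, mul_one])
  refine hfree m _ h1 x ?_
  rw [σ.mul_smul, he, ← σ.mul_smul, inv_mul_cancel, σ.one_smul]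

lemma mk_smul {m : SimplexCategoryᵒᵖ} (g : G) (x : X.obj m) :
    Quot.mk (σ.rel m) (σ.smul g x) = Quot.mk (σ.rel m) x :=
  (Quot.sound ⟨g, rfl⟩).symm

/-- Injectivity core: two natural families of lifts agree up to a single group element. -/
lemma lemB
    (hfree : ∀ (m : SimplexCategoryᵒᵖ) (g : G), g ≠ 1 → ∀ x : X.obj m, σ.smul g x ≠ x)
    (k : ℕ) (hk : 1 ≤ k) (p : SimplexCategory)
    (F F' : ∀ (a : SimplexCategory), a.len ≤ k → (a ⟶ p) → X.obj (op a))
    (hF : ∀ ⦃a : SimplexCategory⦄ (ha : a.len ≤ k) ⦃b : SimplexCategory⦄ (hb : b.len ≤ k)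
      (η : b ⟶ a) (x : a ⟶ p), X.map η.op (F a ha x) = F b hb (η ≫ x))
    (hF' : ∀ ⦃a : SimplexCategory⦄ (ha : a.len ≤ k) ⦃b : SimplexCategory⦄ (hb : b.len ≤ k)
      (η : b ⟶ a) (x : a ⟶ p), X.map η.op (F' a ha x) = F' b hb (η ≫ x))
    (hq : ∀ a ha x, Quot.mk (σ.rel (op a)) (F a ha x) = Quot.mk (σ.rel (op a)) (F' a ha x)) :
    ∃ g : G, ∀ a ha x, σ.smul g (F a ha x) = F' a ha x := by
  have h0 : (⦋0⦌ : SimplexCategory).len ≤ k := by rw [SimplexCategory.len_mk]; omega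
  have h1 : (⦋1⦌ : SimplexCategory).len ≤ k := by rw [SimplexCategory.len_mk]; omega
  obtain ⟨g, hg⟩ := σ.exists_smul_eq (hq ⦋0⦌ h0 (SimplexCategory.const ⦋0⦌ p 0))
  have vert : ∀ i : (⦋0⦌ : SimplexCategory) ⟶ p, σ.smul g (F ⦋0⦌ h0 i) = F' ⦋0⦌ h0 i := by
    intro i
    obtain ⟨h, hh⟩ := σ.exists_smul_eq (hq ⦋1⦌ h1 (edg 0 (i.toOrderHom 0) (Fin.zero_le _)))
    have r0 : σ.smul h (F ⦋0⦌ h0 (SimplexCategory.const ⦋0⦌ ⦋1⦌ 0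
          ≫ edg 0 (i.toOrderHom 0) (Fin.zero_le _)))
        = F' ⦋0⦌ h0 (SimplexCategory.const ⦋0⦌ ⦋1⦌ 0 ≫ edg 0 (i.toOrderHom 0) (Fin.zero_le _)) := by
      rw [← hF h1 h0 _ _, ← hF' h1 h0 _ _, ← σ.map_smul, hh]
    have r1 : σ.smul h (F ⦋0⦌ h0 (SimplexCategory.const ⦋0⦌ ⦋1⦌ 1
          ≫ edg 0 (i.toOrderHom 0) (Fin.zero_le _)))
        = F' ⦋0⦌ h0 (SimplexCategory.const ⦋0⦌ ⦋1⦌ 1 ≫ edg 0 (i.toOrderHom 0) (Fin.zero_le _)) := by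
      rw [← hF h1 h0 _ _, ← hF' h1 h0 _ _, ← σ.map_smul, hh]
    rw [const_edg0] at r0
    rw [const_edg1, (SimplexCategory.eq_const_of_zero i).symm] at r1
    rwa [σ.smul_cancel hfree (r0.trans hg.symm)] at r1
  refine ⟨g, fun a ha x => ?_⟩
  obtain ⟨h, hh⟩ := σ.exists_smul_eq (hq a ha x)
  have r : σ.smul h (F ⦋0⦌ h0 (SimplexCategory.const ⦋0⦌ a 0 ≫ x))
      = F' ⦋0⦌ h0 (SimplexCategory.const ⦋0⦌ a 0 ≫ x) := by
    rw [← hF ha h0 _ x, ← hF' ha h0 _ x, ← σ.map_smul, hh]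
  rwa [σ.smul_cancel hfree (r.trans (vert _).symm)] at hh

end SSetAction

namespace SSetAction

open SimplexCategory SSetActionAux

variable {G : Type} [Group G] {X : SSet.{0}} (σ : SSetAction G X)

/-- Surjectivity core: a natural family in the quotient lifts to a natural family in `X`. -/
lemma lemC
    (hfree : ∀ (m : SimplexCategoryᵒᵖ) (g : G), g ≠ 1 → ∀ x : X.obj m, σ.smul g x ≠ x)
    (k : ℕ) (hk : 2 ≤ k) (p : SimplexCategory)
    (f : ∀ (a : SimplexCategory), a.len ≤ k → (a ⟶ p) → σ.quotient.obj (op a))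
    (hf : ∀ ⦃a : SimplexCategory⦄ (ha : a.len ≤ k) ⦃b : SimplexCategory⦄ (hb : b.len ≤ k)
      (η : b ⟶ a) (x : a ⟶ p), σ.quotient.map η.op (f a ha x) = f b hb (η ≫ x)) :
    ∃ F : ∀ (a : SimplexCategory), a.len ≤ k → (a ⟶ p) → X.obj (op a),
      (∀ ⦃a : SimplexCategory⦄ (ha : a.len ≤ k) ⦃b : SimplexCategory⦄ (hb : b.len ≤ k)
        (η : b ⟶ a) (x : a ⟶ p), X.map η.op (F a ha x) = F b hb (η ≫ x)) ∧
      ∀ a ha x, Quot.mk (σ.rel (op a)) (F a ha x) = f a ha x := by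
  classical
  have h0 : (⦋0⦌ : SimplexCategory).len ≤ k := by rw [SimplexCategory.len_mk]; omega
  have h1 : (⦋1⦌ : SimplexCategory).len ≤ k := by rw [SimplexCategory.len_mk]; omega
  have h2 : (⦋2⦌ : SimplexCategory).len ≤ k := by rw [SimplexCategory.len_mk]; omega
  -- class computations
  have cls : ∀ {a b : SimplexCategory} (ha : a.len ≤ k) (hb : b.len ≤ k) (η : b ⟶ a)
      (x : a ⟶ p) (z : X.obj (op a)), Quot.mk (σ.rel (op a)) z = f a ha x →
      Quot.mk (σ.rel (op b)) (X.map η.op z) = f b hb (η ≫ x) := by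
    intro a b ha hb η x z hz
    have h : Quot.mk (σ.rel (op b)) (X.map η.op z)
        = σ.quotient.map η.op (Quot.mk (σ.rel (op a)) z) := rfl
    rw [h, hz, hf ha hb η x]
  obtain ⟨y₀, hy₀⟩ := (f ⦋0⦌ h0 (SimplexCategory.const ⦋0⦌ p 0)).exists_rep
  -- the canonical lifts of the vertices
  have hLex : ∀ i : (⦋0⦌ : SimplexCategory) ⟶ p,
      ∃ Li : X.obj (op ⦋0⦌), Quot.mk (σ.rel (op ⦋0⦌)) Li = f ⦋0⦌ h0 i ∧
        ∀ (e : (⦋1⦌ : SimplexCategory) ⟶ p),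
          SimplexCategory.const ⦋0⦌ ⦋1⦌ 0 ≫ e = SimplexCategory.const ⦋0⦌ p 0 →
          SimplexCategory.const ⦋0⦌ ⦋1⦌ 1 ≫ e = i →
          ∀ z, Quot.mk (σ.rel (op ⦋1⦌)) z = f ⦋1⦌ h1 e →
          ∀ g : G, σ.smul g (X.map (SimplexCategory.const ⦋0⦌ ⦋1⦌ 0).op z) = y₀ →
            σ.smul g (X.map (SimplexCategory.const ⦋0⦌ ⦋1⦌ 1).op z) = Li := by
    intro i
    obtain ⟨z0, hz0⟩ := (f ⦋1⦌ h1 (edg 0 (i.toOrderHom 0) (Fin.zero_le _))).exists_rep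
    have hv0 := const_edg0 (y := p) 0 (i.toOrderHom 0) (Fin.zero_le _)
    have hv1 : SimplexCategory.const ⦋0⦌ ⦋1⦌ 1 ≫ edg 0 (i.toOrderHom 0) (Fin.zero_le _) = i := by
      rw [const_edg1]
      exact (SimplexCategory.eq_const_of_zero i).symm
    have hcl0 : Quot.mk (σ.rel (op ⦋0⦌)) (X.map (SimplexCategory.const ⦋0⦌ ⦋1⦌ 0).op z0)
        = Quot.mk (σ.rel (op ⦋0⦌)) y₀ := by
      rw [cls h1 h0 _ _ z0 hz0, hv0, hy₀]
    obtain ⟨g0, hg0⟩ := σ.exists_smul_eq hcl0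
    refine ⟨σ.smul g0 (X.map (SimplexCategory.const ⦋0⦌ ⦋1⦌ 1).op z0), ?_, ?_⟩
    · rw [σ.mk_smul, cls h1 h0 _ _ z0 hz0, hv1]
    · intro e hev0 hev1 z hz g hg
      have hee : e = edg 0 (i.toOrderHom 0) (Fin.zero_le _) := by
        apply SimplexCategory.Hom.ext_one_left
        · exact congrArg (fun q : (⦋0⦌ : SimplexCategory) ⟶ p => q.toOrderHom 0) hev0
        · exact congrArg (fun q : (⦋0⦌ : SimplexCategory) ⟶ p => q.toOrderHom 0) hev1
      subst hee
      obtain ⟨h, hh⟩ := σ.exists_smul_eq (hz0.trans hz.symm)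
      have hv : σ.smul (g * h) (X.map (SimplexCategory.const ⦋0⦌ ⦋1⦌ 0).op z0) = y₀ := by
        rw [σ.mul_smul, ← σ.map_smul, hh, hg]
      have hgh : g * h = g0 := σ.smul_cancel hfree (hv.trans hg0.symm)
      rw [← hh, σ.map_smul, ← σ.mul_smul, hgh]
  choose L hLq hLuniq using hLex
  -- transport along an edge
  have htrans : ∀ (e : (⦋1⦌ : SimplexCategory) ⟶ p) (z : X.obj (op ⦋1⦌)),
      Quot.mk (σ.rel (op ⦋1⦌)) z = f ⦋1⦌ h1 e →
      ∀ g : G, σ.smul g (X.map (SimplexCategory.const ⦋0⦌ ⦋1⦌ 0).op z)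
          = L (SimplexCategory.const ⦋0⦌ ⦋1⦌ 0 ≫ e) →
        σ.smul g (X.map (SimplexCategory.const ⦋0⦌ ⦋1⦌ 1).op z)
          = L (SimplexCategory.const ⦋0⦌ ⦋1⦌ 1 ≫ e) := by
    intro e z hz g hg
    have h01 : (0 : Fin (SimplexCategory.len ⦋2⦌ + 1)) ≤ 1 := by decide
    have h02 : (0 : Fin (SimplexCategory.len ⦋2⦌ + 1)) ≤ 2 := by decide
    have h12 : (1 : Fin (SimplexCategory.len ⦋2⦌ + 1)) ≤ 2 := by decide
    have hij : e.toOrderHom 0 ≤ e.toOrderHom 1 := e.toOrderHom.monotone (by decide)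
    obtain ⟨W, hW⟩ :=
      (f ⦋2⦌ h2 (tri 0 (e.toOrderHom 0) (e.toOrderHom 1) (Fin.zero_le _) hij)).exists_rep
    have hu0t : SimplexCategory.const ⦋0⦌ ⦋2⦌ 0
        ≫ tri 0 (e.toOrderHom 0) (e.toOrderHom 1) (Fin.zero_le _) hij
        = SimplexCategory.const ⦋0⦌ p 0 := const_tri0 _ _ _ _ _
    have hu1t : SimplexCategory.const ⦋0⦌ ⦋2⦌ 1
        ≫ tri 0 (e.toOrderHom 0) (e.toOrderHom 1) (Fin.zero_le _) hij
        = SimplexCategory.const ⦋0⦌ ⦋1⦌ 0 ≫ e := by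
      rw [const_tri1, SimplexCategory.const_comp]
    have hu2t : SimplexCategory.const ⦋0⦌ ⦋2⦌ 2
        ≫ tri 0 (e.toOrderHom 0) (e.toOrderHom 1) (Fin.zero_le _) hij
        = SimplexCategory.const ⦋0⦌ ⦋1⦌ 1 ≫ e := by
      rw [const_tri2, SimplexCategory.const_comp]
    have hu0cls : Quot.mk (σ.rel (op ⦋0⦌)) (X.map (SimplexCategory.const ⦋0⦌ ⦋2⦌ 0).op W)
        = Quot.mk (σ.rel (op ⦋0⦌)) y₀ := by
      rw [cls h2 h0 _ _ W hW, hu0t, hy₀]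
    obtain ⟨h, hh⟩ := σ.exists_smul_eq hu0cls
    have hA : σ.smul h (X.map (SimplexCategory.const ⦋0⦌ ⦋2⦌ 1).op W)
        = L (SimplexCategory.const ⦋0⦌ ⦋1⦌ 0 ≫ e) := by
      have h1e := cls h2 h1 (edg 0 1 h01) _ W hW
      have := hLuniq (SimplexCategory.const ⦋0⦌ ⦋1⦌ 0 ≫ e) (edg 0 1 h01
          ≫ tri 0 (e.toOrderHom 0) (e.toOrderHom 1) (Fin.zero_le _) hij)
        (by rw [← Category.assoc, const_edg0, hu0t])
        (by rw [← Category.assoc, const_edg1, hu1t])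
        (X.map (edg 0 1 h01).op W) h1e h
        (by rw [map_map, const_edg0]; exact hh)
      rwa [map_map, const_edg1] at this
    have hB : σ.smul h (X.map (SimplexCategory.const ⦋0⦌ ⦋2⦌ 2).op W)
        = L (SimplexCategory.const ⦋0⦌ ⦋1⦌ 1 ≫ e) := by
      have h2e := cls h2 h1 (edg 0 2 h02) _ W hW
      have := hLuniq (SimplexCategory.const ⦋0⦌ ⦋1⦌ 1 ≫ e) (edg 0 2 h02
          ≫ tri 0 (e.toOrderHom 0) (e.toOrderHom 1) (Fin.zero_le _) hij)
        (by rw [← Category.assoc, const_edg0, hu0t])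
        (by rw [← Category.assoc, const_edg1, hu2t])
        (X.map (edg 0 2 h02).op W) h2e h
        (by rw [map_map, const_edg0]; exact hh)
      rwa [map_map, const_edg1] at this
    have he12t : edg 1 2 h12 ≫ tri 0 (e.toOrderHom 0) (e.toOrderHom 1) (Fin.zero_le _) hij
        = e := by
      rw [edg_tri12]
      apply SimplexCategory.Hom.ext_one_left <;> rfl
    have h12cls : Quot.mk (σ.rel (op ⦋1⦌)) (X.map (edg 1 2 h12).op W)
        = Quot.mk (σ.rel (op ⦋1⦌)) z := by
      rw [cls h2 h1 (edg 1 2 h12) _ W hW, he12t, hz]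
    obtain ⟨c, hc⟩ := σ.exists_smul_eq h12cls
    have hv0z : X.map (SimplexCategory.const ⦋0⦌ ⦋1⦌ 0).op z
        = σ.smul c (X.map (SimplexCategory.const ⦋0⦌ ⦋2⦌ 1).op W) := by
      rw [← hc, σ.map_smul, map_map, const_edg0]
    have hgc : g * c = h := by
      apply σ.smul_cancel hfree (x := X.map (SimplexCategory.const ⦋0⦌ ⦋2⦌ 1).op W)
      rw [σ.mul_smul, ← hv0z, hg, hA]
    rw [← hc, σ.map_smul, map_map, const_edg1, ← σ.mul_smul, hgc]
    exact hB
  -- the canonical lift of a general simplex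
  have hFex : ∀ (a : SimplexCategory) (ha : a.len ≤ k) (x : a ⟶ p),
      ∃ Fx : X.obj (op a), Quot.mk (σ.rel (op a)) Fx = f a ha x ∧
        ∀ wv, Quot.mk (σ.rel (op a)) wv = f a ha x →
          ∀ g : G, σ.smul g (X.map (SimplexCategory.const ⦋0⦌ a 0).op wv)
              = L (SimplexCategory.const ⦋0⦌ a 0 ≫ x) →
            Fx = σ.smul g wv := by
    intro a ha x
    obtain ⟨w0, hw0⟩ := (f a ha x).exists_rep
    have hcl : Quot.mk (σ.rel (op ⦋0⦌)) (X.map (SimplexCategory.const ⦋0⦌ a 0).op w0)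
        = Quot.mk (σ.rel (op ⦋0⦌)) (L (SimplexCategory.const ⦋0⦌ a 0 ≫ x)) := by
      rw [cls ha h0 _ x w0 hw0, hLq]
    obtain ⟨gd, hgd⟩ := σ.exists_smul_eq hcl
    refine ⟨σ.smul gd w0, by rw [σ.mk_smul, hw0], ?_⟩
    intro wv hwv g hgw
    obtain ⟨c, hc⟩ := σ.exists_smul_eq (hw0.trans hwv.symm)
    have hgc : g * c = gd := by
      apply σ.smul_cancel hfree (x := X.map (SimplexCategory.const ⦋0⦌ a 0).op w0)
      rw [σ.mul_smul, ← σ.map_smul, hc, hgw, hgd]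
    rw [← hc, ← σ.mul_smul, hgc]
  choose F hFq hFuniq using hFex
  -- transport to an arbitrary vertex
  have hvert : ∀ (a : SimplexCategory) (ha : a.len ≤ k) (x : a ⟶ p) (wv : X.obj (op a)),
      Quot.mk (σ.rel (op a)) wv = f a ha x →
      ∀ g : G, σ.smul g (X.map (SimplexCategory.const ⦋0⦌ a 0).op wv)
          = L (SimplexCategory.const ⦋0⦌ a 0 ≫ x) →
      ∀ u : (⦋0⦌ : SimplexCategory) ⟶ a,
        σ.smul g (X.map u.op wv) = L (u ≫ x) := by
    intro a ha x wv hwv g hg u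
    have hu : SimplexCategory.const ⦋0⦌ a (u.toOrderHom 0) = u :=
      (SimplexCategory.eq_const_of_zero u).symm
    have := htrans (edg 0 (u.toOrderHom 0) (Fin.zero_le _) ≫ x)
      (X.map (edg 0 (u.toOrderHom 0) (Fin.zero_le _)).op wv)
      (cls ha h1 _ x wv hwv) g
      (by rw [map_map, const_edg0, ← Category.assoc, const_edg0]; exact hg)
    rw [map_map, const_edg1, ← Category.assoc, const_edg1, hu] at this
    exact this
  refine ⟨F, ?_, hFq⟩
  intro a ha b hb η x
  obtain ⟨w0, hw0⟩ := (f a ha x).exists_rep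
  have hcl : Quot.mk (σ.rel (op ⦋0⦌)) (X.map (SimplexCategory.const ⦋0⦌ a 0).op w0)
      = Quot.mk (σ.rel (op ⦋0⦌)) (L (SimplexCategory.const ⦋0⦌ a 0 ≫ x)) := by
    rw [cls ha h0 _ x w0 hw0, hLq]
  obtain ⟨gd, hgd⟩ := σ.exists_smul_eq hcl
  have hFa : F a ha x = σ.smul gd w0 := hFuniq a ha x w0 hw0 gd hgd
  have hcb : SimplexCategory.const ⦋0⦌ b 0 ≫ η
      = SimplexCategory.const ⦋0⦌ a (η.toOrderHom 0) := SimplexCategory.const_comp _ _ _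
  have hFb : F b hb (η ≫ x) = σ.smul gd (X.map η.op w0) := by
    apply hFuniq b hb (η ≫ x) (X.map η.op w0) (cls ha hb η x w0 hw0) gd
    rw [map_map, hcb, ← Category.assoc, hcb]
    exact hvert a ha x w0 hw0 gd hgd _
  rw [hFa, hFb, σ.map_smul]

end SSetAction

noncomputable section CoskGlue

open SimplexCategory

namespace SSetActionAux

/-- Simplices of the coskeleton are maps of truncated simplicial sets out of a
truncated standard simplex. -/
def Eequiv (k : ℕ) (Y : SSet.{0}) (m : SimplexCategoryᵒᵖ) :
    ((SSet.cosk k).obj Y).obj m ≃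
      ((SSet.truncation k).obj (SSet.stdSimplex.obj m.unop) ⟶ (SSet.truncation k).obj Y) :=
  ((SSet.yonedaEquiv (n := m.unop)).symm.trans ((SSet.coskAdj k).homEquiv _ _).symm)

lemma yE_nat {W V : SSet.{0}} {p : SimplexCategory} (v : SSet.stdSimplex.obj p ⟶ W)
    (α : W ⟶ V) : SSet.yonedaEquiv (X := V) (n := p) (v ≫ α) = α.app (Opposite.op p) (SSet.yonedaEquiv (X := W) (n := p) v) :=
  rfl

lemma Eequiv_nat (k : ℕ) {Y Z : SSet.{0}} (u : Y ⟶ Z) (m : SimplexCategoryᵒᵖ)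
    (y : ((SSet.cosk k).obj Y).obj m) :
    Eequiv k Z m (((SSet.cosk k).map u).app m y)
      = Eequiv k Y m y ≫ (SSet.truncation k).map u := by
  dsimp [Eequiv]
  rw [Equiv.symm_apply_eq, Adjunction.homEquiv_naturality_right, Equiv.symm_apply_eq]
  have h : ((SSet.coskAdj k).homEquiv (SSet.stdSimplex.obj m.unop)
      ((SSet.truncation k).obj Y))
      (((SSet.coskAdj k).homEquiv _ _).symm ((SSet.yonedaEquiv (n := m.unop)).symm y))
      = (SSet.yonedaEquiv (n := m.unop)).symm y := Equiv.apply_symm_apply _ _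
  rw [h, yE_nat]
  exact congrArg _ (Equiv.apply_symm_apply _ _).symm

/-- The family of simplices underlying a map out of a truncated standard simplex. -/
def famOf {k : ℕ} {Y : SSet.{0}} {p : SimplexCategory}
    (φ : (SSet.truncation k).obj (SSet.stdSimplex.obj p) ⟶ (SSet.truncation k).obj Y)
    (a : SimplexCategory) (ha : a.len ≤ k) (x : a ⟶ p) : Y.obj (Opposite.op a) :=
  φ.app (Opposite.op ⟨a, ha⟩) ((SSet.stdSimplex.objEquiv (n := p) (m := Opposite.op a)).symm x)

lemma famOf_nat {k : ℕ} {Y : SSet.{0}} {p : SimplexCategory}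
    (φ : (SSet.truncation k).obj (SSet.stdSimplex.obj p) ⟶ (SSet.truncation k).obj Y)
    ⦃a : SimplexCategory⦄ (ha : a.len ≤ k) ⦃b : SimplexCategory⦄ (hb : b.len ≤ k)
    (η : b ⟶ a) (x : a ⟶ p) :
    Y.map η.op (famOf φ a ha x) = famOf φ b hb (η ≫ x) := by
  have h := ConcreteCategory.congr_hom (φ.naturality
    (show Opposite.op (⟨a, ha⟩ : SimplexCategory.Truncated k) ⟶ Opposite.op ⟨b, hb⟩ from
      Quiver.Hom.op (ObjectProperty.homMk (X := (⟨b, hb⟩ : SimplexCategory.Truncated k)) (Y := ⟨a, ha⟩) η)))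
    ((SSet.stdSimplex.objEquiv (n := p) (m := Opposite.op a)).symm x)
  have harg : ((SSet.truncation k).obj (SSet.stdSimplex.obj p)).map
      (Quiver.Hom.op (ObjectProperty.homMk (X := (⟨b, hb⟩ : SimplexCategory.Truncated k)) (Y := ⟨a, ha⟩) η))
      ((SSet.stdSimplex.objEquiv (n := p) (m := Opposite.op a)).symm x)
      = (SSet.stdSimplex.objEquiv (n := p) (m := Opposite.op b)).symm (η ≫ x) := by
    show (SSet.stdSimplex.obj p).map η.op
        ((SSet.stdSimplex.objEquiv (n := p) (m := Opposite.op a)).symm x) = _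
    rw [SSet.stdSimplex.map_apply, Equiv.apply_symm_apply]
    rfl
  exact Eq.trans h.symm (congrArg (fun t => φ.app (Opposite.op ⟨b, hb⟩) t) harg)

lemma famOf_ext {k : ℕ} {Y : SSet.{0}} {p : SimplexCategory}
    (φ φ' : (SSet.truncation k).obj (SSet.stdSimplex.obj p) ⟶ (SSet.truncation k).obj Y)
    (h : ∀ a ha x, famOf φ a ha x = famOf φ' a ha x) : φ = φ' := by
  apply NatTrans.ext
  ext b s
  obtain ⟨x, rfl⟩ := (SSet.stdSimplex.objEquiv (n := p) (m := Opposite.op b.unop.obj)).symm.surjective s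
  exact h b.unop.obj b.unop.2 x

/-- Reassembling a map of truncated simplicial sets from a natural family. -/
def natOfFam {k : ℕ} {Y : SSet.{0}} {p : SimplexCategory}
    (F : ∀ (a : SimplexCategory), a.len ≤ k → (a ⟶ p) → Y.obj (Opposite.op a))
    (hF : ∀ ⦃a : SimplexCategory⦄ (ha : a.len ≤ k) ⦃b : SimplexCategory⦄ (hb : b.len ≤ k)
      (η : b ⟶ a) (x : a ⟶ p), Y.map η.op (F a ha x) = F b hb (η ≫ x)) :
    (SSet.truncation k).obj (SSet.stdSimplex.obj p) ⟶ (SSet.truncation k).obj Y where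
  app b := ↾(fun s => F b.unop.obj b.unop.2 ((SSet.stdSimplex.objEquiv (n := p) (m := Opposite.op b.unop.obj)) s))
  naturality b b' η := by
    ext s
    have harg : (SSet.stdSimplex.objEquiv (n := p) (m := Opposite.op b'.unop.obj))
        (((SSet.truncation k).obj (SSet.stdSimplex.obj p)).map η s)
        = (show b'.unop.obj ⟶ b.unop.obj from η.unop.hom)
          ≫ ((SSet.stdSimplex.objEquiv (n := p) (m := Opposite.op b.unop.obj)) s) := by
      show (SSet.stdSimplex.objEquiv (n := p)) ((SSet.stdSimplex.obj p).map
        (Quiver.Hom.op (show b'.unop.obj ⟶ b.unop.obj from η.unop.hom)) s) = _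
      rfl
    show F b'.unop.obj b'.unop.2 _
        = Y.map (Quiver.Hom.op (show b'.unop.obj ⟶ b.unop.obj from η.unop.hom))
          (F b.unop.obj b.unop.2 _)
    exact (congrArg (F b'.unop.obj b'.unop.2) harg).trans (hF b.unop.2 b'.unop.2 _ _).symm

lemma famOf_natOfFam {k : ℕ} {Y : SSet.{0}} {p : SimplexCategory}
    (F : ∀ (a : SimplexCategory), a.len ≤ k → (a ⟶ p) → Y.obj (Opposite.op a)) (hF) :
    ∀ a ha x, famOf (natOfFam F hF) a ha x = F a ha x := by
  intro a ha x
  dsimp [famOf, natOfFam]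
  rfl

end SSetActionAux

end CoskGlue


open SSetActionAux

/-- Let `n ≥ 1` and let `G` act freely (in every degree) on a simplicial set
`X`.  Then the induced action of `G` on `Pₙ X = cosk_{n+1} (tr_{n+1} X)` is free in every
degree, and the canonical map `Pₙ(X)/G ⟶ Pₙ(X/G)` is an isomorphism of simplicial sets. -/
theorem cosk_quotient_comparison_isIso
    (n : ℕ) (hn : 1 ≤ n) (G : Type) [Group G] (X : SSet.{0}) (σ : SSetAction G X)
    (hfree : ∀ (m : SimplexCategoryᵒᵖ) (g : G), g ≠ 1 → ∀ x : X.obj m, σ.smul g x ≠ x) :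
    (∀ (m : SimplexCategoryᵒᵖ) (g : G), g ≠ 1 →
      ∀ y : ((SSet.cosk (n + 1)).obj X).obj m, (σ.push (SSet.cosk (n + 1))).smul g y ≠ y) ∧
    IsIso (σ.quotientCompare (SSet.cosk (n + 1))) := by
  constructor
  · intro m g hg y hy
    have h0 : (SimplexCategory.len ⦋0⦌) ≤ n + 1 := by rw [SimplexCategory.len_mk]; omega
    have hE := Eequiv_nat (n + 1) (σ.toHom g) m y
    rw [show ((SSet.cosk (n + 1)).map (σ.toHom g)).app m y = y from hy] at hE
    have hv := congrArg
      (fun φ => famOf φ ⦋0⦌ h0 (SimplexCategory.const ⦋0⦌ m.unop 0)) hE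
    exact hfree (Opposite.op ⦋0⦌) g hg _ hv.symm
  · have key : ∀ m, IsIso ((σ.quotientCompare (SSet.cosk (n + 1))).app m) := by
      intro m
      rw [CategoryTheory.isIso_iff_bijective]
      constructor
      · intro y' z' hyz
        obtain ⟨y, rfl⟩ := Quot.exists_rep y'
        obtain ⟨z, rfl⟩ := Quot.exists_rep z'
        have hyz' : ((SSet.cosk (n + 1)).map σ.quotientHom).app m y
            = ((SSet.cosk (n + 1)).map σ.quotientHom).app m z := hyz
        have hE : Eequiv (n + 1) X m y ≫ (SSet.truncation (n + 1)).map σ.quotientHom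
            = Eequiv (n + 1) X m z ≫ (SSet.truncation (n + 1)).map σ.quotientHom := by
          rw [← Eequiv_nat, ← Eequiv_nat, hyz']
        obtain ⟨g, hgg⟩ := σ.lemB hfree (n + 1) (by omega) m.unop
          (famOf (Eequiv (n + 1) X m y)) (famOf (Eequiv (n + 1) X m z))
          (famOf_nat _) (famOf_nat _)
          (fun a ha x => congrArg (fun φ => famOf φ a ha x) hE)
        refine Quot.sound ⟨g, ?_⟩
        show ((SSet.cosk (n + 1)).map (σ.toHom g)).app m y = z
        apply (Eequiv (n + 1) X m).injective
        rw [Eequiv_nat]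
        apply famOf_ext
        intro a ha x
        exact hgg a ha x
      · intro w
        obtain ⟨F, hFn, hFq⟩ := σ.lemC hfree (n + 1) (by omega) m.unop
          (famOf (Eequiv (n + 1) σ.quotient m w)) (famOf_nat _)
        refine ⟨Quot.mk _ ((Eequiv (n + 1) X m).symm (natOfFam F hFn)), ?_⟩
        show ((SSet.cosk (n + 1)).map σ.quotientHom).app m _ = w
        apply (Eequiv (n + 1) σ.quotient m).injective
        rw [Eequiv_nat, Equiv.apply_symm_apply]
        apply famOf_ext
        intro a ha x
        have hq : famOf (natOfFam F hFn ≫ (SSet.truncation (n + 1)).map σ.quotientHom) a ha x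
            = Quot.mk (σ.rel (Opposite.op a)) (famOf (natOfFam F hFn) a ha x) := rfl
        rw [hq, famOf_natOfFam, hFq]
    haveI := key
    exact NatIso.isIso_of_isIso_app _
end

section
/- Let G be a group and let C be a ℤ-indexed chain complex of G-modules such that for some N ≥ 0 one has H_i(C) = 0 whenever |i| > N. Then there exists a chain complex C^b of G-modules with C^b_i = 0 for all |i| > N together with a zigzag of quasi-isomorphisms C → D ← C^b for some chain complex D of G-modules (so C and C^b are isomorphic in the derived category of G-modules). Moreover, if for every i the G-action on C_i factors through a finite quotient of G, then C^b may be chosen so that the G-action on the entire complex C^b factors through a single finite quotient of G. -/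
open CategoryTheory Limits

/-- A normal finite-index subgroup `H ≤ G` acts trivially on the `G`-representation `V`. -/
def ActsTriviallyOn {G : Type} [Group G] (H : Subgroup G) (V : Rep ℤ G) : Prop :=
  ∀ h ∈ H, V.ρ h = 1

section Aux
open HomologicalComplex ZeroObject

universe v u
variable {A : Type u} [Category.{v} A] [Abelian A]

namespace BddRep


variable (C : ChainComplex A ℤ) (N : ℤ)

noncomputable def qX (i : ℤ) : A := if i < N then C.X i else if i = N then C.opcycles N else 0

noncomputable def qXIso {i : ℤ} (h : i < N) : qX C N i ≅ C.X i := eqToIso (if_pos h)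
noncomputable def qXIsoOp {i : ℤ} (h : i = N) : qX C N i ≅ C.opcycles N :=
  eqToIso (by rw [qX, if_neg (by omega), if_pos h])

lemma qX_isZero {i : ℤ} (h : N < i) : IsZero (qX C N i) := by
  rw [qX, if_neg (by omega), if_neg (by omega)]; exact isZero_zero A

noncomputable def qd (i j : ℤ) : qX C N i ⟶ qX C N j :=
  if hij : j + 1 = i then
    if hi : i < N then (qXIso C N hi).hom ≫ C.d i j ≫ (qXIso C N (by omega)).inv
    else if hi' : i = N then
      (qXIsoOp C N hi').hom ≫ C.fromOpcycles N j ≫ (qXIso C N (by omega)).inv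
    else 0
  else 0

@[reducible] noncomputable def trQ : ChainComplex A ℤ where
  X := qX C N
  d := qd C N
  shape i j h := by rw [qd, dif_neg (by simpa using h)]
  d_comp_d' i j k hij hjk := by
    simp only [ComplexShape.down_Rel] at hij hjk
    rw [qd, dif_pos hij, qd, dif_pos hjk]
    by_cases hi : i < N
    · rw [dif_pos hi, dif_pos (show j < N by omega)]
      simp
    · by_cases hi' : i = N
      · rw [dif_neg hi, dif_pos hi', dif_pos (show j < N by omega)]
        simp [fromOpcycles_d]
      · rw [dif_neg hi, dif_neg hi', zero_comp]

lemma trQ_d_lt {i j : ℤ} (hij : j + 1 = i) (hi : i < N) :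
    (trQ C N).d i j = (qXIso C N hi).hom ≫ C.d i j ≫ (qXIso C N (by omega)).inv := by
  change qd C N i j = _
  rw [qd, dif_pos hij, dif_pos hi]

lemma trQ_d_N {j : ℤ} (hij : j + 1 = N) :
    (trQ C N).d N j = (qXIsoOp C N rfl).hom ≫ C.fromOpcycles N j ≫ (qXIso C N (by omega)).inv := by
  change qd C N N j = _
  rw [qd, dif_pos hij, dif_neg (lt_irrefl N), dif_pos rfl]

lemma trQ_d_gt {i j : ℤ} (hi : N < i) : (trQ C N).d i j = 0 := by
  change qd C N i j = _
  rw [qd]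
  split_ifs with h1 h2 h3 <;> first | rfl | omega

noncomputable def trQπ : C ⟶ trQ C N where
  f i :=
    if h : i < N then (qXIso C N h).inv
    else if h' : i = N then eqToHom (congrArg C.X h') ≫ C.pOpcycles N ≫ (qXIsoOp C N h').inv
    else 0
  comm' i j hij := by
    simp only [ComplexShape.down_Rel] at hij
    beta_reduce
    by_cases hi : i < N
    · rw [dif_pos hi, dif_pos (show j < N by omega), trQ_d_lt C N hij hi]
      simp
    · by_cases hi' : i = N
      · subst hi'
        rw [dif_neg hi, dif_pos rfl, dif_pos (show j < i by omega), trQ_d_N C i hij]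
        simp [p_fromOpcycles]
      · rw [dif_neg hi, dif_neg hi', trQ_d_gt C N (by omega), zero_comp]
        by_cases hj : j = N
        · subst hj
          rw [dif_neg (lt_irrefl j), dif_pos rfl, eqToHom_refl]
          have h0 : C.d i j ≫ C.pOpcycles j = 0 := C.d_pOpcycles i j
          simp [reassoc_of% h0]
        · rw [dif_neg (show ¬ j < N by omega), dif_neg hj, comp_zero]

lemma trQπ_f_lt {i : ℤ} (h : i < N) : (trQπ C N).f i = (qXIso C N h).inv := dif_pos h

lemma trQπ_f_N : (trQπ C N).f N = C.pOpcycles N ≫ (qXIsoOp C N rfl).inv := by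
  change (if h : N < N then _ else if h' : N = N then _ else _) = _
  rw [dif_neg (lt_irrefl N), dif_pos rfl, eqToHom_refl, Category.id_comp]

lemma trQπ_f_gt {i : ℤ} (h : N < i) : (trQπ C N).f i = 0 := by
  change (if h : i < N then _ else if h' : i = N then _ else _) = _
  rw [dif_neg (by omega), dif_neg (by omega)]



variable (K : ChainComplex A ℤ) (M : ℤ)

noncomputable def sX (i : ℤ) : A := if M < i then K.X i else if i = M then K.cycles M else 0

noncomputable def sXIso {i : ℤ} (h : M < i) : sX K M i ≅ K.X i := eqToIso (if_pos h)
noncomputable def sXIsoCyc {i : ℤ} (h : i = M) : sX K M i ≅ K.cycles M :=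
  eqToIso (by rw [sX, if_neg (by omega), if_pos h])

lemma sX_isZero {i : ℤ} (h : i < M) : IsZero (sX K M i) := by
  rw [sX, if_neg (by omega), if_neg (by omega)]; exact isZero_zero A

noncomputable def sd (i j : ℤ) : sX K M i ⟶ sX K M j :=
  if hij : j + 1 = i then
    if hj : M < j then (sXIso K M (by omega)).hom ≫ K.d i j ≫ (sXIso K M hj).inv
    else if hj' : j = M then
      (sXIso K M (by omega)).hom ≫ K.toCycles i M ≫ (sXIsoCyc K M hj').inv
    else 0
  else 0

@[reducible] noncomputable def trS : ChainComplex A ℤ where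
  X := sX K M
  d := sd K M
  shape i j h := by rw [sd, dif_neg (by simpa using h)]
  d_comp_d' i j k hij hjk := by
    simp only [ComplexShape.down_Rel] at hij hjk
    rw [sd, dif_pos hij, sd, dif_pos hjk]
    by_cases hk : M < k
    · rw [dif_pos (show M < j by omega), dif_pos hk]
      simp
    · by_cases hk' : k = M
      · subst hk'
        rw [dif_pos (show k < j by omega), dif_pos rfl]
        have h0 : K.d i j ≫ K.toCycles j k = 0 := K.d_toCycles i j k
        simp [reassoc_of% h0]
      · rw [dif_neg hk, dif_neg hk', comp_zero]

lemma trS_d_gt {i j : ℤ} (hij : j + 1 = i) (hj : M < j) :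
    (trS K M).d i j = (sXIso K M (by omega)).hom ≫ K.d i j ≫ (sXIso K M hj).inv := by
  change sd K M i j = _
  rw [sd, dif_pos hij, dif_pos hj]

lemma trS_d_M {i : ℤ} (hij : M + 1 = i) :
    (trS K M).d i M = (sXIso K M (by omega)).hom ≫ K.toCycles i M ≫ (sXIsoCyc K M rfl).inv := by
  change sd K M i M = _
  rw [sd, dif_pos hij, dif_neg (lt_irrefl M), dif_pos rfl]

lemma trS_d_lt {i j : ℤ} (hj : j < M) : (trS K M).d i j = 0 := by
  change sd K M i j = _
  rw [sd]
  split_ifs with h1 h2 h3 <;> first | rfl | omega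

noncomputable def trSι : trS K M ⟶ K where
  f i :=
    if h : M < i then (sXIso K M h).hom
    else if h' : i = M then (sXIsoCyc K M h').hom ≫ K.iCycles M ≫ eqToHom (congrArg K.X h'.symm)
    else 0
  comm' i j hij := by
    simp only [ComplexShape.down_Rel] at hij
    beta_reduce
    by_cases hj : M < j
    · rw [dif_pos hj, dif_pos (show M < i by omega), trS_d_gt K M hij hj]
      simp
    · by_cases hj' : j = M
      · subst hj'
        rw [dif_pos (show j < i by omega), dif_neg (lt_irrefl j), dif_pos rfl,
          trS_d_M K j hij, eqToHom_refl]
        simp [toCycles_i]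
      · rw [trS_d_lt K M (by omega), zero_comp]
        by_cases hi : i = M
        · subst hi
          rw [dif_neg (lt_irrefl i), dif_pos rfl, eqToHom_refl]
          have h0 : K.iCycles i ≫ K.d i j = 0 := K.iCycles_d i j
          simp [h0]
        · by_cases hi2 : M < i
          · exfalso; omega
          · rw [dif_neg hi2, dif_neg hi, zero_comp]


end BddRep

namespace BddRep
variable (K : ChainComplex A ℤ) (M : ℤ)

lemma trSι_f_gt {i : ℤ} (h : M < i) : (trSι K M).f i = (sXIso K M h).hom := dif_pos h

lemma trSι_f_M : (trSι K M).f M = (sXIsoCyc K M rfl).hom ≫ K.iCycles M := by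
  change (if h : M < M then _ else if h' : M = M then _ else _) = _
  rw [dif_neg (lt_irrefl M), dif_pos rfl, eqToHom_refl, Category.comp_id]

lemma trSι_f_lt {i : ℤ} (h : i < M) : (trSι K M).f i = 0 := by
  change (if h : M < i then _ else if h' : i = M then _ else _) = _
  rw [dif_neg (by omega), dif_neg (by omega)]




def isLimitKernelForkOfEq {X Y P : A} (f g : X ⟶ Y) (h : f = g) (ι : P ⟶ X)
    (wf : ι ≫ f = 0)
    (hl : IsLimit (KernelFork.ofι ι (show ι ≫ g = 0 by rw [← h]; exact wf))) :
    IsLimit (KernelFork.ofι ι wf) := by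
  subst h; exact hl

variable (K : ChainComplex A ℤ) (n : ℤ)

/-- The short complex `K.X (n+1) ⟶ K.X n ⟶ K.X (n-1)`. -/
noncomputable abbrev scFull : ShortComplex A :=
  ShortComplex.mk (K.d (n+1) n) (K.d n (n-1)) (K.d_comp_d _ _ _)

lemma rhdFull_key (h : (ComplexShape.down ℤ).prev n = n + 1) :
    (K.opcyclesIsCokernel (n+1) n h).desc
        (CokernelCofork.ofπ (scFull K n).g (scFull K n).zero)
      = K.fromOpcycles n (n-1) := by
  apply Cofork.IsColimit.hom_ext (K.opcyclesIsCokernel (n+1) n h)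
  rw [Cofork.IsColimit.π_desc]
  simp [p_fromOpcycles]

noncomputable def rhdFull : (scFull K n).RightHomologyData where
  Q := K.opcycles n
  H := kernel (K.fromOpcycles n (n-1))
  p := K.pOpcycles n
  ι := kernel.ι _
  wp := K.d_pOpcycles (n+1) n
  hp := K.opcyclesIsCokernel (n+1) n (by simp)
  wι := by rw [rhdFull_key K n _]; exact kernel.condition _
  hι := isLimitKernelForkOfEq _ _ (rhdFull_key K n _) _ _ (kernelIsKernel _)

variable (Z : A)

/-- The short complex `Z ⟶ K.opcycles n ⟶ K.X (n-1)` with first map zero. -/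
noncomputable abbrev scOp : ShortComplex A :=
  ShortComplex.mk (0 : Z ⟶ K.opcycles n) (K.fromOpcycles n (n-1)) zero_comp

/-- The comparison map. -/
noncomputable def toScOp : scFull K n ⟶ scOp K n Z where
  τ₁ := 0
  τ₂ := K.pOpcycles n
  τ₃ := 𝟙 _
  comm₁₂ := by simp
  comm₂₃ := by simp [p_fromOpcycles]

noncomputable def rhdOp : (scOp K n Z).RightHomologyData :=
  ShortComplex.RightHomologyData.ofIsLimitKernelFork _ rfl _
    (kernelIsKernel (K.fromOpcycles n (n-1)))

noncomputable def rhMapData :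
    ShortComplex.RightHomologyMapData (toScOp K n Z) (rhdFull K n) (rhdOp K n Z) where
  φQ := 𝟙 _
  φH := 𝟙 _
  commp := by simp [toScOp, rhdFull, rhdOp]
  commg' := by
    have h1 := (rhdFull K n).p_g'
    have h2 := (rhdOp K n Z).p_g'
    dsimp [rhdFull, rhdOp, toScOp] at h1 h2 ⊢
    simp only [Category.id_comp, Category.comp_id] at h1 h2 ⊢
    apply (cancel_epi (K.pOpcycles n)).1
    erw [h1, h2, p_fromOpcycles]
  commι := by exact (Category.id_comp _).trans (Category.comp_id _).symm

lemma quasiIso_toScOp : ShortComplex.QuasiIso (toScOp K n Z) := by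
  rw [(rhMapData K n Z).quasiIso_iff]
  dsimp [rhMapData]
  exact IsIso.id _



def isColimitCokernelCoforkOfEq {X Y P : A} (f g : X ⟶ Y) (h : f = g) (π : Y ⟶ P)
    (wf : f ≫ π = 0)
    (hc : IsColimit (CokernelCofork.ofπ π (show g ≫ π = 0 by rw [← h]; exact wf))) :
    IsColimit (CokernelCofork.ofπ π wf) := by
  subst h; exact hc

variable (K : ChainComplex A ℤ) (n : ℤ)

lemma lhdFull_key (h : (ComplexShape.down ℤ).next n = n - 1) :
    (K.cyclesIsKernel n (n-1) h).lift
        (KernelFork.ofι (scFull K n).f (scFull K n).zero)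
      = K.toCycles (n+1) n := by
  apply Fork.IsLimit.hom_ext (K.cyclesIsKernel n (n-1) h)
  rw [Fork.IsLimit.lift_ι]
  simp [toCycles_i]

noncomputable def lhdFull : (scFull K n).LeftHomologyData where
  K := K.cycles n
  H := cokernel (K.toCycles (n+1) n)
  i := K.iCycles n
  π := cokernel.π _
  wi := K.iCycles_d n (n-1)
  hi := K.cyclesIsKernel n (n-1) (by simp)
  wπ := by rw [lhdFull_key K n _]; exact cokernel.condition _
  hπ := isColimitCokernelCoforkOfEq _ _ (lhdFull_key K n _) _ _ (cokernelIsCokernel _)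

variable (Z : A)

noncomputable abbrev scCyc : ShortComplex A :=
  ShortComplex.mk (K.toCycles (n+1) n) (0 : K.cycles n ⟶ Z) comp_zero

noncomputable def fromScCyc : scCyc K n Z ⟶ scFull K n where
  τ₁ := 𝟙 _
  τ₂ := K.iCycles n
  τ₃ := 0
  comm₁₂ := by simp [toCycles_i]
  comm₂₃ := by simp

noncomputable def lhdCyc : (scCyc K n Z).LeftHomologyData :=
  ShortComplex.LeftHomologyData.ofIsColimitCokernelCofork _ rfl _
    (cokernelIsCokernel (K.toCycles (n+1) n))

noncomputable def lhMapData :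
    ShortComplex.LeftHomologyMapData (fromScCyc K n Z) (lhdCyc K n Z) (lhdFull K n) where
  φK := 𝟙 _
  φH := 𝟙 _
  commi := by simp [fromScCyc, lhdCyc, lhdFull]; rfl
  commf' := by
    have h1 := (lhdCyc K n Z).f'_i
    have h2 := (lhdFull K n).f'_i
    dsimp [lhdCyc, lhdFull, fromScCyc] at h1 h2 ⊢
    simp only [Category.id_comp, Category.comp_id] at h1 h2 ⊢
    rw [← cancel_mono (K.iCycles n), h2]
    erw [Category.comp_id]
    have h1' : (lhdCyc K n Z).f' = K.toCycles (n+1) n := by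
      rw [← h1]; exact (Category.comp_id _).symm
    erw [h1']
    exact K.toCycles_i _ _
  commπ := by exact (Category.comp_id _).trans (Category.id_comp _).symm

lemma quasiIso_fromScCyc : ShortComplex.QuasiIso (fromScCyc K n Z) := by
  rw [(lhMapData K n Z).quasiIso_iff]
  dsimp [lhMapData]
  exact IsIso.id _



section Assemble

variable (C : ChainComplex A ℤ) (N : ℤ)

lemma exactAt_of_isZeroX (K : ChainComplex A ℤ) (i : ℤ) (h : IsZero (K.X i)) : K.ExactAt i := by
  rw [exactAt_iff]
  exact ShortComplex.exact_of_isZero_X₂ _ h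

lemma isIso_trQπ_f {i : ℤ} (h : i < N) : IsIso ((trQπ C N).f i) := by
  rw [trQπ_f_lt C N h]; infer_instance

lemma epi_trQπ_f {i : ℤ} (h : i ≤ N) : Epi ((trQπ C N).f i) := by
  rcases lt_or_eq_of_le h with h' | rfl
  · have := isIso_trQπ_f C N h'; infer_instance
  · rw [trQπ_f_N]; exact epi_comp _ _

lemma quasiIso_trQπ (hC : ∀ i, N < i → C.ExactAt i) : QuasiIso (trQπ C N) where
  quasiIsoAt i := by
    rcases lt_trichotomy i N with hi | rfl | hi
    · rw [quasiIsoAt_iff' _ (i+1) i (i-1) (by simp) (by simp)]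
      have e1 : Epi (((shortComplexFunctor' A (ComplexShape.down ℤ) (i+1) i (i-1)).map
          (trQπ C N)).τ₁) := epi_trQπ_f C N (by omega)
      have e2 : IsIso (((shortComplexFunctor' A (ComplexShape.down ℤ) (i+1) i (i-1)).map
          (trQπ C N)).τ₂) := isIso_trQπ_f C N hi
      have e3 : Mono (((shortComplexFunctor' A (ComplexShape.down ℤ) (i+1) i (i-1)).map
          (trQπ C N)).τ₃) := by
        have := isIso_trQπ_f C N (show i - 1 < N by omega)
        change Mono ((trQπ C N).f (i-1))
        infer_instance
      apply ShortComplex.quasiIso_of_epi_of_isIso_of_mono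
    · rw [quasiIsoAt_iff' _ (i+1) i (i-1) (by simp) (by simp)]
      refine (ShortComplex.quasiIso_iff_of_arrow_mk_iso
        ((shortComplexFunctor' A (ComplexShape.down ℤ) (i+1) i (i-1)).map (trQπ C i))
        (toScOp C i (qX C i (i+1)))
        (Arrow.isoMk (Iso.refl _)
          (ShortComplex.isoMk (Iso.refl (qX C i (i+1))) (qXIsoOp C i rfl)
            (qXIso C i (show i - 1 < i by omega)) ?_ ?_) ?_)).2 (quasiIso_toScOp C i _)
      · show 𝟙 (qX C i (i+1)) ≫ (0 : qX C i (i+1) ⟶ C.opcycles i) =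
          (trQ C i).d (i+1) i ≫ (qXIsoOp C i rfl).hom
        rw [trQ_d_gt C i (by omega)]
        simp
      · show (qXIsoOp C i rfl).hom ≫ C.fromOpcycles i (i-1) =
          (trQ C i).d i (i-1) ≫ (qXIso C i (show i - 1 < i by omega)).hom
        rw [trQ_d_N C i (by omega)]
        simp
      · ext
        · show 𝟙 (C.X (i+1)) ≫ (0 : C.X (i+1) ⟶ qX C i (i+1)) = (trQπ C i).f (i+1) ≫ 𝟙 (qX C i (i+1))
          rw [trQπ_f_gt C i (by omega)]
          simp [toScOp]
        · show 𝟙 (C.X i) ≫ C.pOpcycles i = (trQπ C i).f i ≫ (qXIsoOp C i rfl).hom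
          rw [trQπ_f_N]
          simp [toScOp]
        · show 𝟙 (C.X (i-1)) ≫ 𝟙 _ = (trQπ C i).f (i-1) ≫ (qXIso C i (show i - 1 < i by omega)).hom
          rw [trQπ_f_lt C i (by omega)]
          simp [toScOp]
    · rw [quasiIsoAt_iff_exactAt (trQπ C N) i (hC i hi)]
      exact exactAt_of_isZeroX _ _ (qX_isZero C N hi)

variable (K : ChainComplex A ℤ) (M : ℤ)

lemma isIso_trSι_f {i : ℤ} (h : M < i) : IsIso ((trSι K M).f i) := by
  rw [trSι_f_gt K M h]; infer_instance

lemma mono_trSι_f {i : ℤ} (h : M ≤ i) : Mono ((trSι K M).f i) := by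
  rcases lt_or_eq_of_le h with h' | rfl
  · have := isIso_trSι_f K M h'; infer_instance
  · rw [trSι_f_M]; exact mono_comp _ _

lemma quasiIso_trSι (hK : ∀ i, i < M → K.ExactAt i) : QuasiIso (trSι K M) where
  quasiIsoAt i := by
    rcases lt_trichotomy M i with hi | rfl | hi
    · rw [quasiIsoAt_iff' _ (i+1) i (i-1) (by simp) (by simp)]
      have e1 : Epi (((shortComplexFunctor' A (ComplexShape.down ℤ) (i+1) i (i-1)).map
          (trSι K M)).τ₁) := by
        have := isIso_trSι_f K M (show M < i + 1 by omega)
        change Epi ((trSι K M).f (i+1))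
        infer_instance
      have e2 : IsIso (((shortComplexFunctor' A (ComplexShape.down ℤ) (i+1) i (i-1)).map
          (trSι K M)).τ₂) := isIso_trSι_f K M hi
      have e3 : Mono (((shortComplexFunctor' A (ComplexShape.down ℤ) (i+1) i (i-1)).map
          (trSι K M)).τ₃) := mono_trSι_f K M (by omega)
      apply ShortComplex.quasiIso_of_epi_of_isIso_of_mono
    · rw [quasiIsoAt_iff' _ (M+1) M (M-1) (by simp) (by simp)]
      refine (ShortComplex.quasiIso_iff_of_arrow_mk_iso
        ((shortComplexFunctor' A (ComplexShape.down ℤ) (M+1) M (M-1)).map (trSι K M))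
        (fromScCyc K M (sX K M (M-1)))
        (Arrow.isoMk
          (ShortComplex.isoMk (sXIso K M (show M < M + 1 by omega)) (sXIsoCyc K M rfl)
            (Iso.refl (sX K M (M-1))) ?_ ?_) (Iso.refl _) ?_)).2 (quasiIso_fromScCyc K M _)
      · show (sXIso K M (show M < M + 1 by omega)).hom ≫ K.toCycles (M+1) M =
          (trS K M).d (M+1) M ≫ (sXIsoCyc K M rfl).hom
        rw [trS_d_M K M (by omega)]
        simp
      · show (sXIsoCyc K M rfl).hom ≫ (0 : K.cycles M ⟶ sX K M (M-1)) =
          (trS K M).d M (M-1) ≫ 𝟙 (sX K M (M-1))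
        rw [trS_d_lt K M (by omega)]
        simp
      · ext
        · show (sXIso K M (show M < M + 1 by omega)).hom ≫ 𝟙 (K.X (M+1)) =
            (trSι K M).f (M+1) ≫ 𝟙 (K.X (M+1))
          rw [trSι_f_gt K M (by omega)]
        · show (sXIsoCyc K M rfl).hom ≫ K.iCycles M = (trSι K M).f M ≫ 𝟙 (K.X M)
          rw [trSι_f_M]
          simp [fromScCyc]
        · show 𝟙 (sX K M (M-1)) ≫ (0 : sX K M (M-1) ⟶ K.X (M-1)) =
            (trSι K M).f (M-1) ≫ 𝟙 (K.X (M-1))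
          rw [trSι_f_lt K M (by omega)]
          simp [fromScCyc]
    · rw [quasiIsoAt_iff_exactAt' (trSι K M) i (hK i hi)]
      exact exactAt_of_isZeroX _ _ (sX_isZero K M hi)

end Assemble


variable {K : ChainComplex A ℤ} {M : ℤ}

lemma sX_eq_of_lt (K : ChainComplex A ℤ) (M : ℤ) {i : ℤ} (h : M < i) : sX K M i = K.X i := by
  unfold sX
  rw [if_pos h]

end BddRep

namespace BddRep
open HomologicalComplex

variable {G : Type} [Group G]

lemma triv_le {H H' : Subgroup G} {V : Rep ℤ G} (hle : H ≤ H')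
    (ht : ActsTriviallyOn H' V) : ActsTriviallyOn H V :=
  fun h hh => ht h (hle hh)

lemma triv_of_epi {V W : Rep ℤ G} (p : V ⟶ W) [Epi p] {H : Subgroup G}
    (hV : ActsTriviallyOn H V) : ActsTriviallyOn H W := by
  intro h hh
  have hp := (Rep.epi_iff_surjective p).1 inferInstance
  refine DFunLike.ext _ _ fun w => ?_
  obtain ⟨v, rfl⟩ := hp w
  have hc := Rep.hom_comm_apply p h v
  change (W.ρ h) (p.hom v) = p.hom v
  rw [← hc, hV h hh]
  rfl

lemma triv_of_mono {V W : Rep ℤ G} (i : V ⟶ W) [Mono i] {H : Subgroup G}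
    (hW : ActsTriviallyOn H W) : ActsTriviallyOn H V := by
  intro h hh
  have hm := (Rep.mono_iff_injective i).1 inferInstance
  refine DFunLike.ext _ _ fun v => ?_
  apply hm
  have hc := Rep.hom_comm_apply i h v
  change i.hom ((V.ρ h) v) = i.hom v
  rw [hc, hW h hh]
  rfl

lemma triv_of_isZero {V : Rep ℤ G} (hV : IsZero V) {H : Subgroup G} :
    ActsTriviallyOn H V := by
  intro h hh
  have h0 : (𝟙 V : V ⟶ V) = 0 := hV.eq_of_src _ _
  have hz : ∀ x : V, x = 0 := by
    intro x
    calc x = (𝟙 V : V ⟶ V).hom x := rfl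
    _ = (0 : V ⟶ V).hom x := by rw [h0]
    _ = 0 := rfl
  refine DFunLike.ext _ _ fun v => ?_
  rw [hz v]
  simp

end BddRep

end Aux


/-- Let `C` be a `ℤ`-indexed chain complex of `G`-modules whose homology
vanishes in degrees `|i| > N`.  Then `C` is quasi-isomorphic (via a zigzag `C → D ← C^b`)
to a complex `C^b` concentrated in degrees `|i| ≤ N`.  Moreover, if the `G`-action on each
`C_i` factors through a finite quotient of `G`, then `C^b` may be chosen so that the action
on the whole complex factors through a single finite quotient. -/
theorem chainComplex_bounded_replacement
    (G : Type) [Group G] (N : ℕ)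
    (C : ChainComplex (Rep ℤ G) ℤ)
    (hH : ∀ i : ℤ, (N : ℤ) < |i| → IsZero (C.homology i)) :
    (∃ (Cb D : ChainComplex (Rep ℤ G) ℤ) (f : C ⟶ D) (g : Cb ⟶ D),
      (∀ i : ℤ, (N : ℤ) < |i| → IsZero (Cb.X i)) ∧ QuasiIso f ∧ QuasiIso g) ∧
    ((∀ i : ℤ, ∃ H : Subgroup G, H.Normal ∧ H.FiniteIndex ∧ ActsTriviallyOn H (C.X i)) →
      ∃ (Cb D : ChainComplex (Rep ℤ G) ℤ) (f : C ⟶ D) (g : Cb ⟶ D),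
        (∀ i : ℤ, (N : ℤ) < |i| → IsZero (Cb.X i)) ∧ QuasiIso f ∧ QuasiIso g ∧
        ∃ H : Subgroup G, H.Normal ∧ H.FiniteIndex ∧
          ∀ i : ℤ, ActsTriviallyOn H (Cb.X i)) := by
  have hze : (0:ℤ) ≤ (N:ℤ) := Int.natCast_nonneg N
  have hCexact : ∀ i : ℤ, (N:ℤ) < |i| → C.ExactAt i := fun i hi =>
    (C.exactAt_iff_isZero_homology i).2 (hH i hi)
  set D : ChainComplex (Rep ℤ G) ℤ := BddRep.trQ C (N:ℤ) with hD
  set Cb : ChainComplex (Rep ℤ G) ℤ := BddRep.trS D (-(N:ℤ)) with hCb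
  have hfq : QuasiIso (BddRep.trQπ C (N:ℤ)) :=
    BddRep.quasiIso_trQπ C (N:ℤ) (fun i hi => hCexact i (by rw [abs_of_nonneg (by omega)]; exact hi))
  have hDexact : ∀ i : ℤ, i < -(N:ℤ) → D.ExactAt i := by
    intro i hi
    have hC : C.ExactAt i := hCexact i (by rw [abs_of_neg (by omega)]; omega)
    have := hfq.quasiIsoAt i
    exact (quasiIsoAt_iff_exactAt (BddRep.trQπ C (N:ℤ)) i hC).1 this
  have hgq : QuasiIso (BddRep.trSι D (-(N:ℤ))) := BddRep.quasiIso_trSι D _ hDexact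
  have hCbzero : ∀ i : ℤ, (N:ℤ) < |i| → IsZero (Cb.X i) := by
    intro i hi
    by_cases h1 : i < -(N:ℤ)
    · exact BddRep.sX_isZero D _ h1
    · have h2 : (N:ℤ) < i := by
        rcases abs_cases i with ⟨he, _⟩ | ⟨he, _⟩ <;> omega
      have e : Cb.X i = D.X i := BddRep.sX_eq_of_lt D _ (by omega)
      rw [e]
      exact BddRep.qX_isZero C _ h2
  refine ⟨⟨Cb, D, BddRep.trQπ C (N:ℤ), BddRep.trSι D (-(N:ℤ)), hCbzero, hfq, hgq⟩, ?_⟩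
  intro hfin
  choose Hs hnorm hfi htriv using hfin
  refine ⟨Cb, D, BddRep.trQπ C (N:ℤ), BddRep.trSι D (-(N:ℤ)), hCbzero, hfq, hgq,
    ⨅ i ∈ Finset.Icc (-(N:ℤ)) (N:ℤ), Hs i, ?_, ?_, ?_⟩
  · constructor
    intro n hn g
    simp only [Subgroup.mem_iInf] at hn ⊢
    intro i hi
    exact (hnorm i).conj_mem _ (hn i hi) g
  · exact Subgroup.finiteIndex_iInf' _ (fun i _ => hfi i)
  · have hHle : ∀ i : ℤ, -(N:ℤ) ≤ i → i ≤ (N:ℤ) →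
        (⨅ j ∈ Finset.Icc (-(N:ℤ)) (N:ℤ), Hs j) ≤ Hs i := fun i h1 h2 =>
      iInf₂_le i (Finset.mem_Icc.2 ⟨h1, h2⟩)
    have htrivD : ∀ i : ℤ, -(N:ℤ) ≤ i →
        ActsTriviallyOn (⨅ j ∈ Finset.Icc (-(N:ℤ)) (N:ℤ), Hs j) (D.X i) := by
      intro i h1
      rcases lt_trichotomy i (N:ℤ) with h | h | h
      · exact BddRep.triv_of_mono (BddRep.qXIso C (N:ℤ) h).hom
          (BddRep.triv_le (hHle i h1 (by omega)) (htriv i))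
      · have hepi : Epi (C.pOpcycles (N:ℤ) ≫ (BddRep.qXIsoOp C (N:ℤ) rfl).inv) := epi_comp _ _
        have h2 : ActsTriviallyOn (⨅ j ∈ Finset.Icc (-(N:ℤ)) (N:ℤ), Hs j) (D.X (N:ℤ)) :=
          BddRep.triv_of_epi (C.pOpcycles (N:ℤ) ≫ (BddRep.qXIsoOp C (N:ℤ) rfl).inv)
            (BddRep.triv_le (hHle (N:ℤ) (by omega) le_rfl) (htriv (N:ℤ)))
        rw [h]
        exact h2
      · exact BddRep.triv_of_isZero (BddRep.qX_isZero C (N:ℤ) h)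
    intro i
    rcases lt_trichotomy i (-(N:ℤ)) with h | h | h
    · exact BddRep.triv_of_isZero (BddRep.sX_isZero D _ h)
    · have hmono : Mono ((BddRep.sXIsoCyc D (-(N:ℤ)) rfl).hom ≫ D.iCycles (-(N:ℤ))) :=
        mono_comp _ _
      have h2 := BddRep.triv_of_mono ((BddRep.sXIsoCyc D (-(N:ℤ)) rfl).hom ≫ D.iCycles (-(N:ℤ)))
        (htrivD (-(N:ℤ)) le_rfl)
      rw [h]
      exact h2
    · exact BddRep.triv_of_mono (BddRep.sXIso D (-(N:ℤ)) h).hom (htrivD i h.le)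
end
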